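/- Let f be convex on an interval I, x₁,...,xₙ ∈ I, and p a probability vector with pᵢ ≥ 0, ∑pᵢ = 1. Then min_i pᵢ · [∑f(xᵢ) − n·f((∑xᵢ)/n)] ≤ ∑pᵢf(xᵢ) − f(∑pᵢxᵢ) ≤ max_i pᵢ · [∑f(xᵢ) − n·f((∑xᵢ)/n)]. -/

import Mathlib

private lemma jensen_aux {I : Set ℝ} {f : ℝ → ℝ} (hf : ConvexOn ℝ I f)
    {m : ℕ} (w z : Fin m → ℝ) (hw : ∀ i, 0 ≤ w i) (h1 : ∑ i, w i = 1)
    (hz : ∀ i, z i ∈ I) : f (∑ i, w i * z i) ≤ ∑ i, w i * f (z i) := by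
  have := hf.map_sum_le (t := Finset.univ) (fun i _ => hw i) h1 (fun i _ => hz i)
  simpa [smul_eq_mul] using this

theorem stmt4 {I : Set ℝ} {f : ℝ → ℝ} (hf : ConvexOn ℝ I f)
    {n : ℕ} (hn : 0 < n) (x : Fin n → ℝ) (hx : ∀ i, x i ∈ I)
    (p : Fin n → ℝ) (hp : ∀ i, 0 ≤ p i) (hp1 : ∑ i, p i = 1)
    (pmin pmax : ℝ) (hmin : IsLeast (Set.range p) pmin)
    (hmax : IsGreatest (Set.range p) pmax) :
    pmin * (∑ i, f (x i) - n * f ((∑ i, x i) / n)) ≤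
      ∑ i, p i * f (x i) - f (∑ i, p i * x i) ∧
    ∑ i, p i * f (x i) - f (∑ i, p i * x i) ≤
      pmax * (∑ i, f (x i) - n * f ((∑ i, x i) / n)) := by
  have hnR : (0:ℝ) < n := by exact_mod_cast hn
  have hple : ∀ i, pmin ≤ p i := fun i => hmin.2 ⟨i, rfl⟩
  have hpge : ∀ i, p i ≤ pmax := fun i => hmax.2 ⟨i, rfl⟩
  have hpmin0 : 0 ≤ pmin := by
    obtain ⟨i, hi⟩ := hmin.1; exact hi ▸ hp i
  have hnpmin : (n:ℝ) * pmin ≤ 1 := by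
    calc (n:ℝ) * pmin = ∑ _i : Fin n, pmin := by
          simp [Finset.sum_const, mul_comm]
      _ ≤ ∑ i, p i := Finset.sum_le_sum fun i _ => hple i
      _ = 1 := hp1
  have hnpmax : 1 ≤ (n:ℝ) * pmax := by
    calc (1:ℝ) = ∑ i, p i := hp1.symm
      _ ≤ ∑ _i : Fin n, pmax := Finset.sum_le_sum fun i _ => hpge i
      _ = (n:ℝ) * pmax := by simp [Finset.sum_const, mul_comm]
  have hbar_mem : (∑ i, x i) / n ∈ I := by
    have : (∑ i, x i) / n = ∑ i, ((n:ℝ)⁻¹) • x i := by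
      simp [Finset.sum_div, div_eq_inv_mul, smul_eq_mul, Finset.mul_sum]
    rw [this]
    refine hf.1.sum_mem (fun i _ => by positivity) ?_ (fun i _ => hx i)
    field_simp
    rw [Finset.sum_const, Finset.card_univ, Fintype.card_fin, nsmul_eq_mul]
    exact mul_one_div_cancel hnR.ne'
  have hpx_mem : ∑ i, p i * x i ∈ I := by
    have : ∑ i, p i * x i = ∑ i, p i • x i := by simp [smul_eq_mul]
    rw [this]
    exact hf.1.sum_mem (fun i _ => hp i) (by simpa using hp1) (fun i _ => hx i)
  constructor
  · -- lower bound
    set w : Fin (n+1) → ℝ := Fin.snoc (fun i => p i - pmin) ((n:ℝ) * pmin) with hw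
    set z : Fin (n+1) → ℝ := Fin.snoc x ((∑ i, x i) / n) with hz
    have key := jensen_aux hf w z
      (fun i => by
        refine Fin.lastCases ?_ ?_ i
        · simp [hw, Fin.snoc_last]; positivity
        · intro j; simp [hw, Fin.snoc_castSucc]; linarith [hple j])
      (by
        rw [Fin.sum_univ_castSucc]
        simp only [hw, Fin.snoc_castSucc, Fin.snoc_last]
        rw [Finset.sum_sub_distrib]
        simp [hp1, Finset.sum_const, mul_comm])
      (fun i => by
        refine Fin.lastCases ?_ ?_ i
        · simpa [hz, Fin.snoc_last] using hbar_mem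
        · intro j; simpa [hz, Fin.snoc_castSucc] using hx j)
    rw [Fin.sum_univ_castSucc, Fin.sum_univ_castSucc] at key
    simp only [hw, hz, Fin.snoc_castSucc, Fin.snoc_last] at key
    have e1 : ∑ i, (p i - pmin) * x i = ∑ i, p i * x i - pmin * ∑ i, x i := by
      rw [Finset.mul_sum, ← Finset.sum_sub_distrib]; exact Finset.sum_congr rfl fun i _ => by ring
    have e2 : ∑ i, (p i - pmin) * f (x i)
        = ∑ i, p i * f (x i) - pmin * ∑ i, f (x i) := by
      rw [Finset.mul_sum, ← Finset.sum_sub_distrib]; exact Finset.sum_congr rfl fun i _ => by ring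
    have e3 : (n:ℝ) * pmin * ((∑ i, x i) / n) = pmin * ∑ i, x i := by
      field_simp
    rw [e1, e2, e3] at key
    have : ∑ i, p i * x i - pmin * ∑ i, x i + pmin * ∑ i, x i
        = ∑ i, p i * x i := by ring
    rw [this] at key
    nlinarith [key]
  · -- upper bound
    have hc : (0:ℝ) < (n:ℝ) * pmax := lt_of_lt_of_le one_pos hnpmax
    set c : ℝ := (n:ℝ) * pmax with hcdef
    set w : Fin (n+1) → ℝ := Fin.snoc (fun i => (pmax - p i) / c) (1 / c) with hw
    set z : Fin (n+1) → ℝ := Fin.snoc x (∑ i, p i * x i) with hz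
    have key := jensen_aux hf w z
      (fun i => by
        refine Fin.lastCases ?_ ?_ i
        · simp [hw, Fin.snoc_last]; positivity
        · intro j; simp [hw, Fin.snoc_castSucc]
          exact div_nonneg (by linarith [hpge j]) hc.le)
      (by
        rw [Fin.sum_univ_castSucc]
        simp only [hw, Fin.snoc_castSucc, Fin.snoc_last]
        rw [← Finset.sum_div, Finset.sum_sub_distrib, hp1]
        simp only [Finset.sum_const, Finset.card_univ, Fintype.card_fin, nsmul_eq_mul]
        field_simp
        rw [hcdef]; ring)
      (fun i => by
        refine Fin.lastCases ?_ ?_ i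
        · simpa [hz, Fin.snoc_last] using hpx_mem
        · intro j; simpa [hz, Fin.snoc_castSucc] using hx j)
    rw [Fin.sum_univ_castSucc, Fin.sum_univ_castSucc] at key
    simp only [hw, hz, Fin.snoc_castSucc, Fin.snoc_last] at key
    have e1 : ∑ i, (pmax - p i) / c * x i + 1 / c * ∑ i, p i * x i
        = (∑ i, x i) / n := by
      have h1 : ∑ i, (pmax - p i) / c * x i = (∑ i, (pmax - p i) * x i) / c := by
        rw [Finset.sum_div]; exact Finset.sum_congr rfl fun i _ => by ring
      have h2 : ∑ i, (pmax - p i) * x i = pmax * ∑ i, x i - ∑ i, p i * x i := by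
        rw [Finset.mul_sum, ← Finset.sum_sub_distrib]; exact Finset.sum_congr rfl fun i _ => by ring
      rw [h1, h2, hcdef]
      have hpm : pmax ≠ 0 := by intro h; rw [h, mul_zero] at hcdef; linarith
      field_simp
      ring
    have e2 : ∑ i, (pmax - p i) / c * f (x i)
        = (pmax * ∑ i, f (x i) - ∑ i, p i * f (x i)) / c := by
      rw [Finset.mul_sum, ← Finset.sum_sub_distrib, Finset.sum_div]
      exact Finset.sum_congr rfl fun i _ => by ring
    rw [e1, e2] at key
    have key2 : c * f ((∑ i, x i) / n)
        ≤ pmax * ∑ i, f (x i) - ∑ i, p i * f (x i) + f (∑ i, p i * x i) := by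
      have := mul_le_mul_of_nonneg_left key hc.le
      calc c * f ((∑ i, x i) / n) ≤ c * ((pmax * ∑ i, f (x i) - ∑ i, p i * f (x i)) / c
            + 1 / c * f (∑ i, p i * x i)) := this
        _ = pmax * ∑ i, f (x i) - ∑ i, p i * f (x i) + f (∑ i, p i * x i) := by
            field_simp
    rw [hcdef] at key2
    nlinarith [key2]
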